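/- For every natural number n, the rational number 2·ℓ_n³·b_n is an integer, where b_n = a_n·z_n + ∑_{k=1}^n ∑_{m=1}^k (-1)^{m+1}·C(n,k)²·C(n+k,k)² / (2·m³·C(n,m)·C(n+m,m)). -/

import Mathlib

/-- `lcmUpTo n` is `lcm(1, 2, ..., n)` (and `1` for `n = 0`). -/
def lcmUpTo (n : ℕ) : ℕ := (Finset.Icc 1 n).lcm id

/-- `z n = ∑_{m=1}^n 1/m³`. -/
def zseq (n : ℕ) : ℚ := ∑ m ∈ Finset.Icc 1 n, 1 / (m : ℚ) ^ 3

/-- `a n = ∑_{k=0}^n C(n,k)² C(n+k,k)²`. -/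
def aseq (n : ℕ) : ℚ :=
  ∑ k ∈ Finset.range (n + 1), (n.choose k : ℚ) ^ 2 * ((n + k).choose k : ℚ) ^ 2

/-- `b n = a n * z n + ∑_{k=1}^n ∑_{m=1}^k (-1)^{m+1} C(n,k)² C(n+k,k)²
      / (2 m³ C(n,m) C(n+m,m))`. -/
def bseq (n : ℕ) : ℚ :=
  aseq n * zseq n +
    ∑ k ∈ Finset.Icc 1 n, ∑ m ∈ Finset.Icc 1 k,
      (-1 : ℚ) ^ (m + 1) * (n.choose k : ℚ) ^ 2 * ((n + k).choose k : ℚ) ^ 2 /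
        (2 * (m : ℚ) ^ 3 * (n.choose m : ℚ) * ((n + m).choose m : ℚ))

lemma lcmUpTo_dvd_factorial (n : ℕ) : lcmUpTo n ∣ n.factorial := by
  refine Finset.lcm_dvd fun i hi => ?_
  simp only [Finset.mem_Icc] at hi
  exact Nat.dvd_factorial hi.1 hi.2

lemma lcmUpTo_ne_zero (n : ℕ) : lcmUpTo n ≠ 0 :=
  fun h => Nat.factorial_ne_zero n (Nat.eq_zero_of_zero_dvd (h ▸ lcmUpTo_dvd_factorial n))

lemma dvd_lcmUpTo {m n : ℕ} (h1 : 1 ≤ m) (h2 : m ≤ n) : m ∣ lcmUpTo n := by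
  have : m ∈ Finset.Icc 1 n := Finset.mem_Icc.2 ⟨h1, h2⟩
  exact Finset.dvd_lcm (f := id) this

/-- Key valuation bound: `v_p(C(k,m)) ≤ log_p k - v_p(m)`. -/
lemma factorization_choose_le_sub {p m k : ℕ} (hp : p.Prime) (hm : 0 < m) (hmk : m ≤ k) :
    (k.choose m).factorization p ≤ Nat.log p k - m.factorization p := by
  set v := m.factorization p with hv
  rw [Nat.factorization_def _ hp, @padicValNat_def _ ⟨hp⟩ _ (Nat.choose_pos hmk).ne']
  rw [← Nat.cast_le (α := ℕ∞), ← FiniteMultiplicity.emultiplicity_eq_multiplicity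
      (Nat.finiteMultiplicity_iff.2 ⟨hp.ne_one, Nat.choose_pos hmk⟩)]
  rw [hp.emultiplicity_choose hmk (Nat.lt_add_one _), Nat.cast_le]
  have hsub : {i ∈ Finset.Ico 1 (Nat.log p k + 1) |
      p ^ i ≤ m % p ^ i + (k - m) % p ^ i} ⊆ Finset.Ico (v + 1) (Nat.log p k + 1) := by
    intro i hi
    simp only [Finset.mem_filter, Finset.mem_Ico] at hi ⊢
    obtain ⟨⟨h1, h2⟩, hcond⟩ := hi
    refine ⟨?_, h2⟩
    by_contra hle
    push_neg at hle
    have hiv : i ≤ v := by omega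
    have hdvd : p ^ i ∣ m := (pow_dvd_pow p hiv).trans (Nat.ordProj_dvd m p)
    have hmod : m % p ^ i = 0 := Nat.mod_eq_zero_of_dvd hdvd
    have hlt : (k - m) % p ^ i < p ^ i := Nat.mod_lt _ (pow_pos hp.pos i)
    omega
  calc ({i ∈ Finset.Ico 1 (Nat.log p k + 1) |
        p ^ i ≤ m % p ^ i + (k - m) % p ^ i}).card
      ≤ (Finset.Ico (v + 1) (Nat.log p k + 1)).card := Finset.card_le_card hsub
    _ ≤ Nat.log p k - v := by rw [Nat.card_Ico]; omega

lemma mul_choose_dvd_lcmUpTo {m k n : ℕ} (hm : 0 < m) (hmk : m ≤ k) (hkn : k ≤ n) :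
    m * k.choose m ∣ lcmUpTo n := by
  have hk : 0 < k := hm.trans_le hmk
  have hC : 0 < k.choose m := Nat.choose_pos hmk
  rw [← Nat.factorization_le_iff_dvd (by positivity) (lcmUpTo_ne_zero n)]
  intro p
  by_cases hp : p.Prime
  · have hvlog : m.factorization p ≤ Nat.log p k := by
      have h1 : p ^ m.factorization p ∣ m := Nat.ordProj_dvd m p
      have h2 : p ^ m.factorization p ≤ k := (Nat.le_of_dvd hm h1).trans hmk
      exact (Nat.le_log_iff_pow_le hp.one_lt hk.ne').2 h2
    have hstep : (m * k.choose m).factorization p ≤ Nat.log p k := by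
      rw [Nat.factorization_mul hm.ne' hC.ne']
      have := factorization_choose_le_sub hp hm hmk
      simp only [Finsupp.coe_add, Pi.add_apply]
      omega
    refine hstep.trans ?_
    rcases Nat.eq_zero_or_pos (Nat.log p k) with h0 | hpos
    · simp [h0]
    have hdvd : p ^ Nat.log p k ∣ lcmUpTo n := by
      refine dvd_lcmUpTo ?_ ?_
      · exact Nat.one_le_iff_ne_zero.2 (pow_ne_zero _ hp.pos.ne')
      · exact (Nat.pow_log_le_self p hk.ne').trans hkn
    exact (Nat.Prime.pow_dvd_iff_le_factorization hp (lcmUpTo_ne_zero n)).1 hdvd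
  · simp [Nat.factorization_eq_zero_of_not_prime _ hp]

lemma choose_identity_one {m k n : ℕ} (hmk : m ≤ k) (hkn : k ≤ n) :
    n.choose k * k.choose m = n.choose m * (n - m).choose (k - m) := by
  have e1 : k.choose m * m.factorial * (k - m).factorial = k.factorial :=
    Nat.choose_mul_factorial_mul_factorial hmk
  have e2 : n.choose k * k.factorial * (n - k).factorial = n.factorial :=
    Nat.choose_mul_factorial_mul_factorial hkn
  have e3 : n.choose m * m.factorial * (n - m).factorial = n.factorial :=
    Nat.choose_mul_factorial_mul_factorial (hmk.trans hkn)
  have e4 : (n - m).choose (k - m) * (k - m).factorial * (n - k).factorial = (n - m).factorial := by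
    have := Nat.choose_mul_factorial_mul_factorial (Nat.sub_le_sub_right hkn m)
    rwa [show n - m - (k - m) = n - k by omega] at this
  have hpos : 0 < m.factorial * ((k - m).factorial * (n - k).factorial) := by positivity
  refine Nat.eq_of_mul_eq_mul_right hpos ?_
  calc n.choose k * k.choose m * (m.factorial * ((k - m).factorial * (n - k).factorial))
      = n.choose k * (k.choose m * m.factorial * (k - m).factorial) * (n - k).factorial := by ring
    _ = n.factorial := by rw [e1, e2]
    _ = n.choose m * m.factorial * (n - m).factorial := e3.symm
    _ = n.choose m * m.factorial *
        ((n - m).choose (k - m) * (k - m).factorial * (n - k).factorial) := by rw [e4]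
    _ = n.choose m * (n - m).choose (k - m) *
        (m.factorial * ((k - m).factorial * (n - k).factorial)) := by ring

lemma choose_identity_two {m k n : ℕ} (hmk : m ≤ k) :
    (n + k).choose k * k.choose m = (n + m).choose m * (n + k).choose (k - m) := by
  have e1 : k.choose m * m.factorial * (k - m).factorial = k.factorial :=
    Nat.choose_mul_factorial_mul_factorial hmk
  have e2 : (n + k).choose k * k.factorial * n.factorial = (n + k).factorial := by
    have := Nat.choose_mul_factorial_mul_factorial (Nat.le_add_left k n)
    rwa [show n + k - k = n by omega] at this
  have e3 : (n + m).choose m * m.factorial * n.factorial = (n + m).factorial := by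
    have := Nat.choose_mul_factorial_mul_factorial (Nat.le_add_left m n)
    rwa [show n + m - m = n by omega] at this
  have e4 : (n + k).choose (k - m) * (k - m).factorial * (n + m).factorial
      = (n + k).factorial := by
    have := Nat.choose_mul_factorial_mul_factorial
      (show k - m ≤ n + k by omega)
    rwa [show n + k - (k - m) = n + m by omega] at this
  have hpos : 0 < m.factorial * ((k - m).factorial * n.factorial) := by positivity
  refine Nat.eq_of_mul_eq_mul_right hpos ?_
  calc (n + k).choose k * k.choose m * (m.factorial * ((k - m).factorial * n.factorial))
      = (n + k).choose k * (k.choose m * m.factorial * (k - m).factorial) * n.factorial := by ring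
    _ = (n + k).factorial := by rw [e1, e2]
    _ = (n + k).choose (k - m) * (k - m).factorial * (n + m).factorial := e4.symm
    _ = (n + k).choose (k - m) * (k - m).factorial *
        ((n + m).choose m * m.factorial * n.factorial) := by rw [e3]
    _ = (n + m).choose m * (n + k).choose (k - m) *
        (m.factorial * ((k - m).factorial * n.factorial)) := by ring

lemma key_dvd {m k n : ℕ} (hm : 0 < m) (hmk : m ≤ k) (hkn : k ≤ n) :
    m ^ 3 * n.choose m * (n + m).choose m ∣
      lcmUpTo n ^ 3 * (n.choose k) ^ 2 * ((n + k).choose k) ^ 2 := by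
  have hC : 0 < k.choose m := Nat.choose_pos hmk
  set L := lcmUpTo n
  have d3 : m * k.choose m ∣ L := mul_choose_dvd_lcmUpTo hm hmk hkn
  have d4 : m ∣ L := dvd_lcmUpTo hm (hmk.trans hkn)
  have d5 : n.choose m ∣ n.choose k * k.choose m :=
    ⟨(n - m).choose (k - m), choose_identity_one hmk hkn⟩
  have d6 : (n + m).choose m ∣ (n + k).choose k * k.choose m :=
    ⟨(n + k).choose (k - m), choose_identity_two hmk⟩
  have A : (m * k.choose m) * ((m * k.choose m) * (m * (n.choose m * ((n + m).choose m))))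
      ∣ L * (L * (L * ((n.choose k * k.choose m) * ((n + k).choose k * k.choose m)))) :=
    mul_dvd_mul d3 (mul_dvd_mul d3 (mul_dvd_mul d4 (mul_dvd_mul d5 d6)))
  have main2 : (m ^ 3 * n.choose m * (n + m).choose m) * (k.choose m) ^ 2 ∣
      (L ^ 3 * (n.choose k) ^ 2 * ((n + k).choose k) ^ 2) * (k.choose m) ^ 2 := by
    calc (m ^ 3 * n.choose m * (n + m).choose m) * (k.choose m) ^ 2
        = (m * k.choose m) * ((m * k.choose m) * (m * (n.choose m * ((n + m).choose m)))) := by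
          ring
      _ ∣ L * (L * (L * ((n.choose k * k.choose m) * ((n + k).choose k * k.choose m)))) := A
      _ ∣ (L * (L * (L * ((n.choose k * k.choose m) * ((n + k).choose k * k.choose m))))) *
            (n.choose k * (n + k).choose k) := dvd_mul_right _ _
      _ = (L ^ 3 * (n.choose k) ^ 2 * ((n + k).choose k) ^ 2) * (k.choose m) ^ 2 := by ring
  exact (Nat.mul_dvd_mul_iff_right (pow_pos hC 2)).1 main2

theorem two_lcm_cubed_mul_b_int (n : ℕ) :
    ∃ m : ℤ, 2 * (lcmUpTo n : ℚ) ^ 3 * bseq n = (m : ℚ) := by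
  set L := lcmUpTo n with hL
  have hmem : 2 * (L : ℚ) ^ 3 * bseq n ∈ (Int.castRingHom ℚ).range := by
    rw [bseq, mul_add]
    refine Subring.add_mem _ ?_ ?_
    · have hz : 2 * (L : ℚ) ^ 3 * (aseq n * zseq n)
          = aseq n * ∑ m ∈ Finset.Icc 1 n, 2 * (L : ℚ) ^ 3 * (1 / (m : ℚ) ^ 3) := by
        rw [← Finset.mul_sum, zseq]; ring
      rw [hz]
      refine Subring.mul_mem _ ?_ ?_
      · rw [aseq]
        refine Subring.sum_mem _ fun k _ => ?_
        exact ⟨(n.choose k : ℤ) ^ 2 * ((n + k).choose k : ℤ) ^ 2, by simp⟩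
      · refine Subring.sum_mem _ fun m hm => ?_
        simp only [Finset.mem_Icc] at hm
        obtain ⟨c, hc⟩ := dvd_lcmUpTo hm.1 hm.2
        have hm0 : (m : ℚ) ≠ 0 := Nat.cast_ne_zero.2 (by omega)
        refine ⟨2 * (c : ℤ) ^ 3, ?_⟩
        have hcQ : (L : ℚ) = (m : ℚ) * (c : ℚ) := by exact_mod_cast congrArg (Nat.cast : ℕ → ℚ) hc
        rw [hcQ]
        simp only [eq_intCast]
        push_cast
        field_simp
    · rw [Finset.mul_sum]
      refine Subring.sum_mem _ fun k hk => ?_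
      rw [Finset.mul_sum]
      refine Subring.sum_mem _ fun m hm => ?_
      simp only [Finset.mem_Icc] at hk hm
      have hm1 : 0 < m := hm.1
      have hmk : m ≤ k := hm.2
      have hkn : k ≤ n := hk.2
      obtain ⟨c, hc⟩ := key_dvd hm1 hmk hkn
      refine ⟨(-1) ^ (m + 1) * c, ?_⟩
      have hm0 : (m : ℚ) ≠ 0 := Nat.cast_ne_zero.2 hm1.ne'
      have hC1 : ((n.choose m : ℚ)) ≠ 0 :=
        Nat.cast_ne_zero.2 (Nat.choose_pos (hmk.trans hkn)).ne'
      have hC2 : (((n + m).choose m : ℚ)) ≠ 0 :=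
        Nat.cast_ne_zero.2 (Nat.choose_pos (Nat.le_add_left m n)).ne'
      have hcQ : (L : ℚ) ^ 3 * (n.choose k : ℚ) ^ 2 * ((n + k).choose k : ℚ) ^ 2
          = (m : ℚ) ^ 3 * (n.choose m : ℚ) * ((n + m).choose m : ℚ) * (c : ℚ) := by
        have := congrArg (Nat.cast : ℕ → ℚ) hc
        push_cast at this
        linarith [this]
      simp only [eq_intCast]
      push_cast
      field_simp
      linear_combination (-1 : ℚ) * hcQ
  obtain ⟨m, hm⟩ := hmem
  exact ⟨m, hm.symm⟩
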